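/- Let p be a prime number, let Ω be an algebraic closure of ℚ_p, and let K be a finite extension of ℚ_p (a field with a ℚ_p-algebra structure, finite-dimensional over ℚ_p). Let P be the (finite) set of ℚ_p-algebra homomorphisms K → Ω, and fix one element ι ∈ P, giving Ω the structure of a K-algebra via ι. Then the plectic Galois group 𝒢_{K,plec} := Aut_{K-alg}(K ⊗_{ℚ_p} Ω) is isomorphic, as an abstract group, to the wreath product (P → Gal(Ω/K)) ⋊ Perm(P), i.e. the semidirect product of the group of functions P → Aut_{K-alg}(Ω) (with pointwise multiplication) by the symmetric group of P, where a permutation ω acts on a function g by (ω·g)(τ) = g(ω⁻¹(τ)). In particular the image of the factor P → Gal(Ω/K) corresponds to a normal subgroup with the image of Perm(P) as a complement. -/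

import Mathlib

set_option linter.unusedSectionVars false


open scoped TensorProduct

/-- The wreath action: a permutation `ω` of `P` acts on functions `P → G` by
`(ω · g) τ = g (ω⁻¹ τ)`. -/
def wreathAction (P : Type*) (G : Type*) [Group G] : Equiv.Perm P →* MulAut (P → G) where
  toFun ω :=
    { toFun := fun g τ => g (ω.symm τ)
      invFun := fun g τ => g (ω τ)
      left_inv := fun g => by funext τ; simp
      right_inv := fun g => by funext τ; simp
      map_mul' := fun g h => rfl }
  map_one' := by
    ext g τ
    simp
    rfl
  map_mul' := fun ω₁ ω₂ => by
    ext g τ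
    rfl

namespace Statement0Aux


variable (p : ℕ) [Fact p.Prime] (K : Type*) [Field K] [Algebra ℚ_[p] K]

local notation "Ω" => AlgebraicClosure ℚ_[p]

def B : Type _ := (K →ₐ[ℚ_[p]] Ω) → Ω

noncomputable instance : CommRing (B p K) := inferInstanceAs (CommRing ((K →ₐ[ℚ_[p]] Ω) → Ω))
noncomputable instance : Algebra ℚ_[p] (B p K) :=
  inferInstanceAs (Algebra ℚ_[p] ((K →ₐ[ℚ_[p]] Ω) → Ω))
noncomputable instance : Algebra Ω (B p K) :=
  inferInstanceAs (Algebra Ω ((K →ₐ[ℚ_[p]] Ω) → Ω))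
noncomputable instance : IsScalarTower ℚ_[p] Ω (B p K) :=
  inferInstanceAs (IsScalarTower ℚ_[p] Ω ((K →ₐ[ℚ_[p]] Ω) → Ω))

noncomputable instance : Algebra K (B p K) :=
  (Pi.ringHom fun τ : K →ₐ[ℚ_[p]] Ω => τ.toRingHom).toAlgebra

@[simp] lemma algebraMapK_apply (x : K) (τ : K →ₐ[ℚ_[p]] Ω) :
    algebraMap K (B p K) x τ = τ x := rfl

@[simp] lemma mul_apply (f g : B p K) (τ : K →ₐ[ℚ_[p]] Ω) : (f * g) τ = f τ * g τ := rfl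

@[simp] lemma add_apply (f g : B p K) (τ : K →ₐ[ℚ_[p]] Ω) : (f + g) τ = f τ + g τ := rfl

@[simp] lemma one_apply (τ : K →ₐ[ℚ_[p]] Ω) : (1 : B p K) τ = 1 := rfl

noncomputable instance : IsScalarTower ℚ_[p] K (B p K) :=
  IsScalarTower.of_algebraMap_eq (fun x => funext fun τ => (τ.commutes x).symm)

/-- The natural `K`-algebra map `K ⊗[ℚ_p] Ω → B`. -/
noncomputable def psi : K ⊗[ℚ_[p]] Ω →ₐ[K] B p K :=
  Algebra.TensorProduct.lift (Algebra.ofId K (B p K))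
    ((Algebra.ofId Ω (B p K)).restrictScalars ℚ_[p]) (fun _ _ => Commute.all _ _)

@[simp] lemma psi_tmul (x : K) (y : Ω) (τ : K →ₐ[ℚ_[p]] Ω) :
    psi p K (x ⊗ₜ y) τ = τ x * y := rfl

/-- The same map, but with the tensor factors flipped, as an `Ω`-algebra map. -/
noncomputable def psi' : Ω ⊗[ℚ_[p]] K →ₐ[Ω] B p K :=
  Algebra.TensorProduct.lift (Algebra.ofId Ω (B p K))
    (IsScalarTower.toAlgHom ℚ_[p] K (B p K)) (fun _ _ => Commute.all _ _)

@[simp] lemma psi'_tmul (y : Ω) (x : K) (τ : K →ₐ[ℚ_[p]] Ω) :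
    psi' p K (y ⊗ₜ x) τ = y * τ x := rfl

variable [FiniteDimensional ℚ_[p] K]

noncomputable instance : Fintype (K →ₐ[ℚ_[p]] Ω) := inferInstance

lemma psi'_range_top : LinearMap.range (psi' p K).toLinearMap = ⊤ := by
  classical
  by_contra hne
  obtain ⟨φ, φ0, hφ⟩ :=
    (LinearMap.range (psi' p K).toLinearMap).exists_le_ker_of_lt_top (lt_top_iff_ne_top.2 hne)
  set c : (K →ₐ[ℚ_[p]] Ω) → Ω := fun τ => φ (Pi.single τ 1) with hc
  have hφeval : ∀ f : B p K, φ f = ∑ τ : K →ₐ[ℚ_[p]] Ω, f τ • c τ := by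
    intro f
    have : f = ∑ τ : K →ₐ[ℚ_[p]] Ω, f τ • (Pi.single τ 1 : B p K) := by
      funext τ'
      show f τ' = (∑ τ : K →ₐ[ℚ_[p]] Ω, f τ • (Pi.single τ 1 : (K →ₐ[ℚ_[p]] Ω) → Ω)) τ'
      rw [Finset.sum_apply]
      simp [Pi.single_apply]
      erw [Finset.sum_ite_eq]
      simp
    conv_lhs => rw [this]
    erw [map_sum]
    simp [hc]
    refine Finset.sum_congr rfl (fun x _ => ?_)
    erw [LinearMap.map_smul]
    rfl
  -- the coefficients kill all characters
  have hker : ∀ x : K, ∑ τ : K →ₐ[ℚ_[p]] Ω, c τ • (τ x) = 0 := by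
    intro x
    have hmem : psi' p K (1 ⊗ₜ x) ∈ LinearMap.range (psi' p K).toLinearMap := ⟨1 ⊗ₜ x, rfl⟩
    have := hφ hmem
    rw [LinearMap.mem_ker, hφeval] at this
    simpa [smul_eq_mul, mul_comm] using this
  -- linear independence of characters
  have li : LinearIndependent Ω (fun τ : K →ₐ[ℚ_[p]] Ω => (τ : K → Ω)) := by
    have h1 := linearIndependent_monoidHom K Ω
    have h2 : Function.Injective (fun τ : K →ₐ[ℚ_[p]] Ω => (τ : K →* Ω)) := by
      intro a b hab
      ext x
      exact DFunLike.congr_fun hab x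
    exact h1.comp _ h2
  have hc0 : ∀ τ, c τ = 0 := by
    intro τ
    refine Fintype.linearIndependent_iff.mp li c ?_ τ
    funext x
    simpa using hker x
  apply φ0
  ext f
  rw [hφeval]
  simp [hc0]

lemma psi'_surjective : Function.Surjective (psi' p K) := fun y => by
  obtain ⟨x, hx⟩ := LinearMap.range_eq_top.mp (psi'_range_top p K) y
  exact ⟨x, hx⟩

open Module in
lemma psi'_bijective : Function.Bijective (psi' p K) := by
  have fin2 : FiniteDimensional Ω (B p K) :=
    inferInstanceAs (FiniteDimensional Ω ((K →ₐ[ℚ_[p]] Ω) → Ω))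
  have hdim : finrank Ω (Ω ⊗[ℚ_[p]] K) = finrank Ω (B p K) := by
    rw [Module.finrank_baseChange]
    have h1 : finrank Ω (B p K) = Fintype.card (K →ₐ[ℚ_[p]] Ω) :=
      Module.finrank_pi Ω
    rw [h1, AlgHom.card]
  have hsurj : Function.Surjective (psi' p K).toLinearMap := psi'_surjective p K
  refine ⟨?_, psi'_surjective p K⟩
  exact (LinearMap.injective_iff_surjective_of_finrank_eq_finrank hdim).mpr hsurj

lemma psi_bijective : Function.Bijective (psi p K) := by
  have h : ∀ z, psi p K z = psi' p K ((Algebra.TensorProduct.comm ℚ_[p] K Ω) z) := by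
    intro z
    induction z using TensorProduct.induction_on with
    | zero => simp
    | tmul x y =>
        rw [Algebra.TensorProduct.comm_tmul]
        funext τ
        rw [psi_tmul, psi'_tmul, mul_comm]
    | add a b ha hb => rw [map_add, map_add, map_add, ha, hb]
  rw [show ⇑(psi p K) = ⇑(psi' p K) ∘ ⇑(Algebra.TensorProduct.comm ℚ_[p] K Ω) from
    funext h]
  exact (psi'_bijective p K).comp (AlgEquiv.bijective _)

/-- The `K`-algebra isomorphism `K ⊗[ℚ_p] Ω ≃ B`. -/
noncomputable def psiEquiv : (K ⊗[ℚ_[p]] Ω) ≃ₐ[K] B p K :=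
  AlgEquiv.ofBijective (psi p K) (psi_bijective p K)



/-- Extending an embedding along an algebraic extension, into an algebraically closed field. -/
lemma exists_algHom_comp {F K' Ω₁ Ω₂ : Type*} [Field F] [Field K'] [Field Ω₁] [Field Ω₂]
    [Algebra F K'] [Algebra F Ω₁] [Algebra F Ω₂] [IsAlgClosed Ω₂]
    [Algebra.IsAlgebraic F Ω₁] (f : K' →ₐ[F] Ω₁) (g : K' →ₐ[F] Ω₂) :
    ∃ σ : Ω₁ →ₐ[F] Ω₂, ∀ x, σ (f x) = g x := by
  letI : Algebra K' Ω₁ := f.toRingHom.toAlgebra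
  letI : Algebra K' Ω₂ := g.toRingHom.toAlgebra
  haveI t1 : IsScalarTower F K' Ω₁ :=
    IsScalarTower.of_algebraMap_eq fun x => (f.commutes x).symm
  haveI t2 : IsScalarTower F K' Ω₂ :=
    IsScalarTower.of_algebraMap_eq fun x => (g.commutes x).symm
  haveI : Algebra.IsAlgebraic K' Ω₁ := Algebra.IsAlgebraic.tower_top (K := F) K'
  let σ := IsAlgClosed.lift (R := K') (S := Ω₁) (M := Ω₂)
  exact ⟨σ.restrictScalars F, fun x => σ.commutes x⟩


section PartB

variable [Algebra K (AlgebraicClosure ℚ_[p])] [IsScalarTower ℚ_[p] K (AlgebraicClosure ℚ_[p])]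
variable (σ : (K →ₐ[ℚ_[p]] AlgebraicClosure ℚ_[p]) →
    (AlgebraicClosure ℚ_[p] ≃ₐ[ℚ_[p]] AlgebraicClosure ℚ_[p]))
  (hσ : ∀ (τ : K →ₐ[ℚ_[p]] AlgebraicClosure ℚ_[p]) (x : K),
    σ τ (algebraMap K (AlgebraicClosure ℚ_[p]) x) = τ x)

/-- The building block of the wreath-product action on `B`. -/
noncomputable def phiAux (g : (K →ₐ[ℚ_[p]] Ω) → (Ω ≃ₐ[K] Ω)) (ω : Equiv.Perm (K →ₐ[ℚ_[p]] Ω)) :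
    B p K ≃ₐ[K] B p K where
  toFun f τ := σ τ (g τ ((σ (ω⁻¹ τ)).symm (f (ω⁻¹ τ))))
  invFun f τ := σ τ ((g (ω τ)).symm ((σ (ω τ)).symm (f (ω τ))))
  left_inv f := by
    funext τ
    simp
  right_inv f := by
    funext τ
    simp
  map_mul' f f' := by
    funext τ
    show σ τ (g τ ((σ (ω⁻¹ τ)).symm ((f * f') (ω⁻¹ τ)))) = _
    rw [mul_apply, map_mul, map_mul, map_mul]
    rfl
  map_add' f f' := by
    funext τ
    show σ τ (g τ ((σ (ω⁻¹ τ)).symm ((f + f') (ω⁻¹ τ)))) = _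
    rw [add_apply, map_add, map_add, map_add]
    rfl
  commutes' x := by
    funext τ
    show σ τ (g τ ((σ (ω⁻¹ τ)).symm (algebraMap K (B p K) x (ω⁻¹ τ)))) = _
    rw [algebraMapK_apply, ← hσ (ω⁻¹ τ) x, AlgEquiv.symm_apply_apply,
      AlgEquiv.commutes, hσ τ x, algebraMapK_apply]

@[simp] lemma phiAux_apply (g : (K →ₐ[ℚ_[p]] Ω) → (Ω ≃ₐ[K] Ω)) (ω : Equiv.Perm (K →ₐ[ℚ_[p]] Ω))
    (f : B p K) (τ : K →ₐ[ℚ_[p]] Ω) :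
    phiAux p K σ hσ g ω f τ = σ τ (g τ ((σ (ω⁻¹ τ)).symm (f (ω⁻¹ τ)))) := rfl

/-- The wreath product mapped into the automorphism group of `B`. -/
noncomputable def Phi :
    (((K →ₐ[ℚ_[p]] AlgebraicClosure ℚ_[p]) →
        (AlgebraicClosure ℚ_[p] ≃ₐ[K] AlgebraicClosure ℚ_[p])) ⋊[wreathAction
          (K →ₐ[ℚ_[p]] AlgebraicClosure ℚ_[p])
          (AlgebraicClosure ℚ_[p] ≃ₐ[K] AlgebraicClosure ℚ_[p])]
      Equiv.Perm (K →ₐ[ℚ_[p]] AlgebraicClosure ℚ_[p])) →* (B p K ≃ₐ[K] B p K) where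
  toFun w := phiAux p K σ hσ w.left w.right
  map_one' := by
    apply AlgEquiv.ext; intro f; funext τ
    simp
  map_mul' w₁ w₂ := by
    apply AlgEquiv.ext; intro f; funext τ
    simp [SemidirectProduct.mul_left, SemidirectProduct.mul_right, AlgEquiv.mul_apply,
      wreathAction, mul_inv_rev, Equiv.Perm.inv_def, Equiv.Perm.mul_apply]
    rfl

lemma Phi_injective : Function.Injective (Phi p K σ hσ) := by
  classical
  rw [injective_iff_map_eq_one]
  rintro ⟨l, r⟩ hw
  have hfun : ∀ (f : B p K) τ, phiAux p K σ hσ l r f τ = f τ := by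
    intro f τ
    have := congrArg (fun (e : B p K ≃ₐ[K] B p K) => e f τ) hw
    simpa [Phi] using this
  have hright : r = 1 := by
    apply Equiv.ext
    intro τ₀
    show r τ₀ = τ₀
    by_contra hne
    have h := hfun (fun b => if b = τ₀ then (1 : AlgebraicClosure ℚ_[p]) else 0) (r τ₀)
    erw [phiAux_apply, Equiv.Perm.inv_def, Equiv.symm_apply_apply] at h
    rw [if_pos rfl, if_neg hne] at h
    simp only [map_one] at h
    exact one_ne_zero h
  have hleft : l = 1 := by
    funext τ
    apply AlgEquiv.ext
    intro z
    have h := hfun (fun _ => σ τ z) τ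
    erw [phiAux_apply, hright] at h
    simp only [inv_one, Equiv.Perm.coe_one, id_eq] at h
    rw [AlgEquiv.symm_apply_apply] at h
    have := (σ τ).injective h
    simpa using this
  rw [hleft, hright]
  rfl

noncomputable def evalB (τ : K →ₐ[ℚ_[p]] AlgebraicClosure ℚ_[p]) :
    B p K →ₐ[ℚ_[p]] AlgebraicClosure ℚ_[p] where
  toFun f := f τ
  map_one' := rfl
  map_mul' _ _ := rfl
  map_zero' := rfl
  map_add' _ _ := rfl
  commutes' _ := rfl

@[simp] lemma evalB_apply (τ : K →ₐ[ℚ_[p]] Ω) (f : B p K) : evalB p K τ f = f τ := rfl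

open Classical in
noncomputable def singleB (a : K →ₐ[ℚ_[p]] AlgebraicClosure ℚ_[p]) (y : AlgebraicClosure ℚ_[p]) :
    B p K := fun b => if b = a then y else 0

open Classical in
@[simp] lemma singleB_apply (a : K →ₐ[ℚ_[p]] Ω) (y : Ω) (b : K →ₐ[ℚ_[p]] Ω) :
    singleB p K a y b = if b = a then y else 0 := rfl

lemma singleB_mul (a : K →ₐ[ℚ_[p]] Ω) (y y' : Ω) :
    singleB p K a y * singleB p K a y' = singleB p K a (y * y') := by
  funext b
  rw [mul_apply]
  by_cases h : b = a <;> simp [h]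

lemma singleB_mul_single (a b : K →ₐ[ℚ_[p]] Ω) (hab : a ≠ b) (y y' : Ω) :
    singleB p K a y * singleB p K b y' = 0 := by
  funext c
  rw [mul_apply]
  show _ * _ = (0 : Ω)
  rw [singleB_apply, singleB_apply]
  by_cases h : c = a
  · have hcb : ¬ (c = b) := by rintro rfl; exact hab h.symm
    rw [if_neg hcb, mul_zero]
  · rw [if_neg h, zero_mul]

lemma singleB_add (a : K →ₐ[ℚ_[p]] Ω) (y y' : Ω) :
    singleB p K a y + singleB p K a y' = singleB p K a (y + y') := by
  funext b
  rw [add_apply]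
  by_cases h : b = a <;> simp [h]

lemma singleB_zero (a : K →ₐ[ℚ_[p]] Ω) : singleB p K a 0 = 0 := by
  funext b
  rw [singleB_apply, ite_self]
  rfl

lemma algebraMap_mul_singleB (r : ℚ_[p]) (a : K →ₐ[ℚ_[p]] Ω) (y : Ω) :
    algebraMap ℚ_[p] (B p K) r * singleB p K a y
      = singleB p K a (algebraMap ℚ_[p] (AlgebraicClosure ℚ_[p]) r * y) := by
  funext b
  rw [mul_apply]
  show algebraMap ℚ_[p] (AlgebraicClosure ℚ_[p]) r * _ = _
  by_cases h : b = a <;> simp [h]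

variable [FiniteDimensional ℚ_[p] K]

lemma sum_singleB (f : B p K) : (∑ a, singleB p K a (f a)) = f := by
  funext b
  show evalB p K b (∑ a, singleB p K a (f a)) = f b
  rw [map_sum]
  simp only [evalB_apply, singleB_apply]
  erw [Finset.sum_eq_single b (fun x _ hx => if_neg (fun hh => hx hh.symm))
    (fun hmem => absurd (Finset.mem_univ _) hmem), if_pos rfl]

lemma psi_algebraMapQp (ψ : B p K ≃ₐ[K] B p K) (r : ℚ_[p]) :
    ψ (algebraMap ℚ_[p] (B p K) r) = algebraMap ℚ_[p] (B p K) r := by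
  rw [IsScalarTower.algebraMap_apply ℚ_[p] K (B p K), AlgEquiv.commutes]

lemma exists_struct (ψ : B p K ≃ₐ[K] B p K) :
    ∃ (u : (K →ₐ[ℚ_[p]] AlgebraicClosure ℚ_[p]) → (K →ₐ[ℚ_[p]] AlgebraicClosure ℚ_[p]))
      (h : (K →ₐ[ℚ_[p]] AlgebraicClosure ℚ_[p]) →
        (AlgebraicClosure ℚ_[p] →ₐ[ℚ_[p]] AlgebraicClosure ℚ_[p])),
      ∀ (f : B p K) τ, ψ f τ = h τ (f (u τ)) := by
  classical
  set e : (K →ₐ[ℚ_[p]] Ω) → B p K := fun a => singleB p K a 1 with he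
  have idem : ∀ a τ, ψ (e a) τ = 0 ∨ ψ (e a) τ = 1 := by
    intro a τ
    have h2 : ψ (e a) τ * ψ (e a) τ = ψ (e a) τ := by
      rw [← mul_apply, ← map_mul, he]
      simp only []
      rw [singleB_mul, one_mul]
    rcases eq_or_ne (ψ (e a) τ) 0 with h0 | h0
    · exact Or.inl h0
    · right
      exact mul_left_cancel₀ h0 (by rw [h2, mul_one])
  have sum1 : ∀ τ, ∑ a, ψ (e a) τ = 1 := by
    intro τ
    have hsum : (∑ a, e a) = (1 : B p K) := by
      have := sum_singleB p K (1 : B p K)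
      simpa [he] using this
    have e1 : evalB p K τ (ψ (∑ a, e a)) = 1 := by rw [hsum, map_one, map_one]
    rw [map_sum ψ _ Finset.univ, map_sum (evalB p K τ) _ Finset.univ] at e1
    simpa using e1
  have orth : ∀ a b τ, a ≠ b → ψ (e a) τ * ψ (e b) τ = 0 := by
    intro a b τ hab
    rw [← mul_apply, ← map_mul, he]
    simp only []
    rw [singleB_mul_single p K a b hab, map_zero]
    rfl
  have exu : ∀ τ, ∃ a, ψ (e a) τ = 1 ∧ ∀ b, b ≠ a → ψ (e b) τ = 0 := by
    intro τ
    have hne : (∑ a, ψ (e a) τ) ≠ 0 := by rw [sum1]; exact one_ne_zero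
    obtain ⟨a, -, ha⟩ := Finset.exists_ne_zero_of_sum_ne_zero hne
    have ha1 : ψ (e a) τ = 1 := (idem a τ).resolve_left ha
    refine ⟨a, ha1, fun b hb => ?_⟩
    have h0 := orth b a τ hb
    rwa [ha1, mul_one] at h0
  choose u hu1 hu0 using exu
  have key : ∀ (f : B p K) τ, ψ f τ = ψ (singleB p K (u τ) (f (u τ))) τ := by
    intro f τ
    conv_lhs => rw [← sum_singleB p K f]
    have expand : ψ (∑ a, singleB p K a (f a)) τ
        = ∑ a, ψ (singleB p K a (f a)) τ := by
      rw [map_sum ψ _ Finset.univ]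
      exact map_sum (evalB p K τ) (fun a => ψ (singleB p K a (f a))) Finset.univ
    rw [expand]
    refine Finset.sum_eq_single (u τ) (fun b _ hb => ?_) (fun hmem => absurd (Finset.mem_univ _) hmem)
    have hfact : singleB p K b (f b) = singleB p K b (f b) * e b := by
      rw [he]
      simp only []
      rw [singleB_mul, mul_one]
    rw [hfact, map_mul, mul_apply, hu0 τ b hb, mul_zero]
  refine ⟨u, fun τ =>
    { toFun := fun y => ψ (singleB p K (u τ) y) τ
      map_one' := hu1 τ
      map_mul' := fun y y' => by
        show ψ (singleB p K (u τ) (y * y')) τ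
          = ψ (singleB p K (u τ) y) τ * ψ (singleB p K (u τ) y') τ
        rw [← singleB_mul, map_mul, mul_apply]
      map_zero' := by
        show ψ (singleB p K (u τ) 0) τ = 0
        rw [singleB_zero, map_zero]
        rfl
      map_add' := fun y y' => by
        show ψ (singleB p K (u τ) (y + y')) τ
          = ψ (singleB p K (u τ) y) τ + ψ (singleB p K (u τ) y') τ
        rw [← singleB_add, map_add, add_apply]
      commutes' := fun r => by
        show ψ (singleB p K (u τ) (algebraMap ℚ_[p] (AlgebraicClosure ℚ_[p]) r)) τ
          = algebraMap ℚ_[p] (AlgebraicClosure ℚ_[p]) r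
        have h1 : singleB p K (u τ) (algebraMap ℚ_[p] (AlgebraicClosure ℚ_[p]) r)
            = algebraMap ℚ_[p] (B p K) r * e (u τ) := by
          rw [he]
          simp only []
          rw [algebraMap_mul_singleB, mul_one]
        rw [h1, map_mul, psi_algebraMapQp, mul_apply, hu1 τ, mul_one]
        rfl }, ?_⟩
  intro f τ
  rw [key f τ]
  rfl

lemma Phi_surjective : Function.Surjective (Phi p K σ hσ) := by
  intro φ
  obtain ⟨u, h, hform⟩ := exists_struct p K φ
  obtain ⟨u', h', hform'⟩ := exists_struct p K φ.symm
  have huu' : ∀ τ, u' (u τ) = τ := by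
    intro τ
    by_contra hne
    have hcalc : singleB p K (u' (u τ)) (1 : AlgebraicClosure ℚ_[p]) τ = 1 := by
      conv_lhs => rw [← AlgEquiv.apply_symm_apply φ (singleB p K (u' (u τ)) 1)]
      rw [hform, hform', singleB_apply, if_pos rfl, map_one, map_one]
    rw [singleB_apply, if_neg (fun hh => hne hh.symm)] at hcalc
    exact zero_ne_one hcalc
  have hu'u : ∀ τ, u (u' τ) = τ := by
    intro τ
    by_contra hne
    have hcalc : singleB p K (u (u' τ)) (1 : AlgebraicClosure ℚ_[p]) τ = 1 := by
      conv_lhs => rw [← AlgEquiv.symm_apply_apply φ (singleB p K (u (u' τ)) 1)]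
      rw [hform', hform, singleB_apply, if_pos rfl, map_one, map_one]
    rw [singleB_apply, if_neg (fun hh => hne hh.symm)] at hcalc
    exact zero_ne_one hcalc
  have hsem : ∀ τ (x : K), h τ ((u τ) x) = τ x := by
    intro τ x
    have h0 := hform (algebraMap K (B p K) x) τ
    rw [AlgEquiv.commutes] at h0
    rw [algebraMapK_apply, algebraMapK_apply] at h0
    exact h0.symm
  let ω : Equiv.Perm (K →ₐ[ℚ_[p]] AlgebraicClosure ℚ_[p]) := ⟨u', u, hu'u, huu'⟩
  have hbij : ∀ τ, Function.Bijective
      ⇑(((σ τ).symm.toAlgHom.comp ((h τ).comp (σ (u τ)).toAlgHom))) := by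
    intro τ
    exact (σ τ).symm.bijective.comp
      ((Algebra.IsAlgebraic.algHom_bijective (h τ)).comp (σ (u τ)).bijective)
  let E : (K →ₐ[ℚ_[p]] AlgebraicClosure ℚ_[p]) →
      (AlgebraicClosure ℚ_[p] ≃ₐ[ℚ_[p]] AlgebraicClosure ℚ_[p]) := fun τ =>
    AlgEquiv.ofBijective _ (hbij τ)
  have hE : ∀ τ z, E τ z = (σ τ).symm (h τ (σ (u τ) z)) := fun _ _ => rfl
  have hcomm : ∀ τ (x : K),
      E τ (algebraMap K (AlgebraicClosure ℚ_[p]) x)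
        = algebraMap K (AlgebraicClosure ℚ_[p]) x := by
    intro τ x
    rw [hE, hσ (u τ) x, hsem τ x, ← hσ τ x, AlgEquiv.symm_apply_apply]
  let g : (K →ₐ[ℚ_[p]] AlgebraicClosure ℚ_[p]) →
      (AlgebraicClosure ℚ_[p] ≃ₐ[K] AlgebraicClosure ℚ_[p]) := fun τ =>
    { (E τ).toRingEquiv with commutes' := hcomm τ }
  refine ⟨⟨g, ω⟩, ?_⟩
  apply AlgEquiv.ext
  intro f
  funext τ
  show phiAux p K σ hσ g ω f τ = φ f τ
  rw [phiAux_apply, hform f τ]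
  have hωinv : ω⁻¹ τ = u τ := rfl
  rw [hωinv]
  have hg : ∀ τ z, g τ z = (σ τ).symm (h τ (σ (u τ) z)) := fun _ _ => rfl
  rw [hg, AlgEquiv.apply_symm_apply, AlgEquiv.apply_symm_apply]

lemma exists_sigma (τ : K →ₐ[ℚ_[p]] Ω) :
    ∃ σ : Ω ≃ₐ[ℚ_[p]] Ω, ∀ x : K, σ (algebraMap K Ω x) = τ x := by
  obtain ⟨σ₀, hσ₀⟩ := exists_algHom_comp (IsScalarTower.toAlgHom ℚ_[p] K Ω) τ
  exact ⟨AlgEquiv.ofBijective σ₀ (Algebra.IsAlgebraic.algHom_bijective σ₀), hσ₀⟩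


lemma mainEquiv [Algebra K (AlgebraicClosure ℚ_[p])]
    [IsScalarTower ℚ_[p] K (AlgebraicClosure ℚ_[p])] [FiniteDimensional ℚ_[p] K] :
    Nonempty ((B p K ≃ₐ[K] B p K) ≃*
      ((K →ₐ[ℚ_[p]] AlgebraicClosure ℚ_[p]) →
          (AlgebraicClosure ℚ_[p] ≃ₐ[K] AlgebraicClosure ℚ_[p])) ⋊[wreathAction
            (K →ₐ[ℚ_[p]] AlgebraicClosure ℚ_[p])
            (AlgebraicClosure ℚ_[p] ≃ₐ[K] AlgebraicClosure ℚ_[p])]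
        Equiv.Perm (K →ₐ[ℚ_[p]] AlgebraicClosure ℚ_[p])) := by
  choose σ hσ using fun τ => exists_sigma p K τ
  exact ⟨(MulEquiv.ofBijective (Phi p K σ hσ)
    ⟨Phi_injective p K σ hσ, Phi_surjective p K σ hσ⟩).symm⟩

end PartB
end Statement0Aux

/-- Let `K` be a finite extension of `ℚ_p`, `Ω` an algebraic closure of
`ℚ_p`, `P` the set of `ℚ_p`-algebra embeddings `K → Ω`, and fix `ι ∈ P` giving `Ω` its
`K`-algebra structure.  Then the plectic Galois group `Aut_{K-alg}(K ⊗_{ℚ_p} Ω)` is isomorphic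
to the wreath product `(P → Gal(Ω/K)) ⋊ Perm(P)`. -/
theorem statement0 (p : ℕ) [Fact p.Prime] (K : Type*) [Field K] [Algebra ℚ_[p] K]
    [FiniteDimensional ℚ_[p] K]
    (ι : K →ₐ[ℚ_[p]] AlgebraicClosure ℚ_[p]) :
    letI : Algebra K (AlgebraicClosure ℚ_[p]) := ι.toRingHom.toAlgebra
    Nonempty
      (((K ⊗[ℚ_[p]] AlgebraicClosure ℚ_[p]) ≃ₐ[K] (K ⊗[ℚ_[p]] AlgebraicClosure ℚ_[p])) ≃*
        ((K →ₐ[ℚ_[p]] AlgebraicClosure ℚ_[p]) →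
            (AlgebraicClosure ℚ_[p] ≃ₐ[K] AlgebraicClosure ℚ_[p])) ⋊[wreathAction
              (K →ₐ[ℚ_[p]] AlgebraicClosure ℚ_[p])
              (AlgebraicClosure ℚ_[p] ≃ₐ[K] AlgebraicClosure ℚ_[p])]
          Equiv.Perm (K →ₐ[ℚ_[p]] AlgebraicClosure ℚ_[p])) := by
  letI : Algebra K (AlgebraicClosure ℚ_[p]) := ι.toRingHom.toAlgebra
  haveI : IsScalarTower ℚ_[p] K (AlgebraicClosure ℚ_[p]) :=
    IsScalarTower.of_algebraMap_eq fun x => (ι.commutes x).symm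
  obtain ⟨e⟩ := Statement0Aux.mainEquiv p K
  exact ⟨(AlgEquiv.autCongr (Statement0Aux.psiEquiv p K)).trans e⟩
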